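/- Consider a two-hidden-layer network: widths m₀ = n, m₁, m₂, weights W¹ ∈ ℝ^{m₁×n}, W² ∈ ℝ^{m₂×m₁}, biases b¹ ∈ ℝ^{m₁}, b² ∈ ℝ^{m₂}, scalar activations φ¹, φ² incrementally sector bounded on ℝ by [α¹, β¹] and [α², β²] respectively, applied componentwise as Φ¹, Φ², and matrices A ∈ ℝ^{n×n}, g ∈ ℝ^{n×l}, Y ∈ ℝ^{l×n}, W_min ∈ ℝ^{n×m₂}, c ∈ ℝⁿ. Let λ̲ be the minimum eigenvalue of α¹β¹·W¹ᵀW¹ and assume λ̲ ≥ 0. Suppose there exist a symmetric positive definite S ∈ ℝ^{n×n} and constants 0 < s̲ ≤ s̄, μ > 0 with s̲·I ⪯ S ⪯ s̄·I such that, with R̄ = AS + SAᵀ + gY + Yᵀgᵀ − 2·s̲·λ̲·S, the symmetric block matrix [[−μ·Iₙ, S, 0, 0], [S, R̄, (α¹+β¹)·S·W¹ᵀ, W_min], [0, (α¹+β¹)·W¹·S, −2·α²β²·W²ᵀW² − 2·I_{m₁}, (α²+β²)·W²ᵀ], [0, W_minᵀ, (α²+β²)·W², −2·I_{m₂}]]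 ⪯ 0. Then, setting H = Y·S⁻¹, any two differentiable functions x₁, x₂ : [0,∞) → ℝⁿ satisfying ẋ(t) = (A + gH)·x(t) + W_min·Φ²(W²·Φ¹(W¹·x(t) + b¹) + b²) + c for all t ≥ 0 satisfy ‖x₁(t) − x₂(t)‖ ≤ √(s̄/s̲)·e^{−(s̲/(2μ))·t}·‖x₁(0) − x₂(0)‖ for all t ≥ 0. -/

import Mathlib

open Matrix

lemma dot_self_nonneg {n : ℕ} (v : Fin n → ℝ) : 0 ≤ v ⬝ᵥ v :=
  Finset.sum_nonneg fun i _ => mul_self_nonneg (v i)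

lemma cauchy_dot {n : ℕ} (x y : Fin n → ℝ) : (x ⬝ᵥ y)^2 ≤ (x ⬝ᵥ x) * (y ⬝ᵥ y) := by
  simpa [dotProduct, sq] using Finset.sum_mul_sq_le_sq_mul_sq Finset.univ x y

lemma psd_cauchy {n : ℕ} {M : Matrix (Fin n) (Fin n) ℝ} (hM : M.PosSemidef)
    (hMsym : Mᵀ = M) (x y : Fin n → ℝ) :
    (x ⬝ᵥ M *ᵥ y)^2 ≤ (x ⬝ᵥ M *ᵥ x) * (y ⬝ᵥ M *ᵥ y) := by
  have hsym : y ⬝ᵥ M *ᵥ x = x ⬝ᵥ M *ᵥ y := by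
    rw [Matrix.dotProduct_mulVec, ← Matrix.mulVec_transpose, hMsym, dotProduct_comm]
  have key : ∀ t : ℝ, 0 ≤ (y ⬝ᵥ M *ᵥ y) * (t * t) + (2 * (x ⬝ᵥ M *ᵥ y)) * t + (x ⬝ᵥ M *ᵥ x) := by
    intro t
    have h := hM.dotProduct_mulVec_nonneg (x + t • y)
    rw [star_trivial] at h
    simp only [Matrix.mulVec_add, Matrix.mulVec_smul, dotProduct_add,
      add_dotProduct, dotProduct_smul, smul_dotProduct,
      smul_eq_mul] at h
    rw [hsym] at h
    linarith [h]
  have hd := discrim_le_zero key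
  rw [discrim] at hd
  nlinarith [hd]

lemma spectral_lb {n : ℕ} {M : Matrix (Fin n) (Fin n) ℝ} (hM : M.IsHermitian) {lam : ℝ}
    (h : ∀ i, lam ≤ hM.eigenvalues i) (x : Fin n → ℝ) :
    lam * (x ⬝ᵥ x) ≤ x ⬝ᵥ M *ᵥ x := by
  have key : (M - lam • 1).PosSemidef := by
    have hdiag : (diagonal (fun i => hM.eigenvalues i - lam)).PosSemidef :=
      Matrix.PosSemidef.diagonal (fun i => sub_nonneg.2 (h i))
    have h2 := hdiag.mul_mul_conjTranspose_same (hM.eigenvectorUnitary : Matrix (Fin n) (Fin n) ℝ)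
    have h3 : (hM.eigenvectorUnitary : Matrix (Fin n) (Fin n) ℝ) *
        diagonal (fun i => hM.eigenvalues i - lam) *
        (hM.eigenvectorUnitary : Matrix (Fin n) (Fin n) ℝ)ᴴ = M - lam • 1 := by
      have hdd : diagonal (fun i => hM.eigenvalues i - lam) =
          diagonal (RCLike.ofReal ∘ hM.eigenvalues) - lam • 1 := by
        simp [Matrix.smul_one_eq_diagonal, diagonal_sub]
      rw [hdd, Matrix.mul_sub, Matrix.sub_mul]
      have hU : (hM.eigenvectorUnitary : Matrix (Fin n) (Fin n) ℝ) *
          (hM.eigenvectorUnitary : Matrix (Fin n) (Fin n) ℝ)ᴴ = 1 := by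
        have := Matrix.mem_unitaryGroup_iff.mp hM.eigenvectorUnitary.2
        rwa [Matrix.star_eq_conjTranspose] at this
      have hst := hM.spectral_theorem
      simp only [Unitary.conjStarAlgAut_apply, Unitary.coe_star, Matrix.star_eq_conjTranspose] at hst
      rw [← hst, Matrix.mul_smul, Matrix.mul_one, Matrix.smul_mul, hU]
    rw [h3] at h2
    exact h2
  have := key.dotProduct_mulVec_nonneg x
  simp only [star_trivial, sub_mulVec, smul_mulVec, one_mulVec, dotProduct_sub,
    dotProduct_smul, smul_eq_mul] at this
  linarith

lemma decay_lemma {V Vd : ℝ → ℝ} {K : ℝ}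
    (hV : ∀ t, 0 ≤ t → HasDerivAt V (Vd t) t)
    (hle : ∀ t, 0 ≤ t → Vd t ≤ -K * V t) :
    ∀ t, 0 ≤ t → V t ≤ V 0 * Real.exp (-K * t) := by
  intro t ht
  set g : ℝ → ℝ := fun t => V t * Real.exp (K * t) with hg
  have hg' : ∀ s, 0 ≤ s → HasDerivAt g ((Vd s + K * V s) * Real.exp (K * s)) s := by
    intro s hs
    have h1 : HasDerivAt (fun u => Real.exp (K * u)) (K * Real.exp (K * s)) s := by
      simpa [mul_comm, Function.comp_def] using (Real.hasDerivAt_exp (K * s)).comp s ((hasDerivAt_id s).const_mul K)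
    have := (hV s hs).mul h1
    refine this.congr_deriv ?_
    ring
  have hanti : AntitoneOn g (Set.Ici 0) := by
    apply antitoneOn_of_deriv_nonpos (convex_Ici 0)
    · exact fun s hs => ((hg' s hs).continuousAt).continuousWithinAt
    · intro s hs
      rw [interior_Ici] at hs
      exact ((hg' s (le_of_lt hs)).differentiableAt).differentiableWithinAt
    · intro s hs
      rw [interior_Ici] at hs
      rw [(hg' s hs.le).deriv]
      have := hle s hs.le
      have hexp : 0 < Real.exp (K * s) := Real.exp_pos _
      nlinarith
  have := hanti (Set.self_mem_Ici) (Set.mem_Ici.2 ht) ht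
  simp only [hg, mul_zero, Real.exp_zero, mul_one] at this
  have hexp : 0 < Real.exp (K * t) := Real.exp_pos _
  rw [neg_mul, Real.exp_neg]
  have h2 := (le_div_iff₀ hexp).mpr this
  calc V t ≤ V 0 / Real.exp (K*t) := h2
    _ = V 0 * (Real.exp (K*t))⁻¹ := by ring



/-- The Euclidean norm of a vector in `ℝⁿ`. -/
noncomputable def eNorm {n : ℕ} (v : Fin n → ℝ) : ℝ := Real.sqrt (v ⬝ᵥ v)

set_option maxHeartbeats 1000000 in
/-- two-hidden-layer case: with `H = Y S⁻¹`, the 4×4 block LMI guarantees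
contraction of the controlled system
`ẋ = (A + gH) x + W_min Φ²(W² Φ¹(W¹ x + b¹) + b²) + c`. Here `lam` is the minimum
eigenvalue of `α¹β¹ · W¹ᵀW¹`, assumed nonnegative. -/
theorem controlled_two_layer_contractive_LMI
    (n m₁ m₂ l : ℕ)
    (A : Matrix (Fin n) (Fin n) ℝ)
    (g : Matrix (Fin n) (Fin l) ℝ) (Y : Matrix (Fin l) (Fin n) ℝ)
    (W1 : Matrix (Fin m₁) (Fin n) ℝ) (W2 : Matrix (Fin m₂) (Fin m₁) ℝ)
    (Wmin : Matrix (Fin n) (Fin m₂) ℝ)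
    (b1 : Fin m₁ → ℝ) (b2 : Fin m₂ → ℝ) (c : Fin n → ℝ)
    (φ1 φ2 : ℝ → ℝ) (α1 β1 α2 β2 : ℝ)
    (hsec1 : ∀ a d : ℝ,
      (φ1 a - φ1 d - α1 * (a - d)) * (φ1 a - φ1 d - β1 * (a - d)) ≤ 0)
    (hsec2 : ∀ a d : ℝ,
      (φ2 a - φ2 d - α2 * (a - d)) * (φ2 a - φ2 d - β2 * (a - d)) ≤ 0)
    (hHerm : ((α1 * β1) • (W1ᵀ * W1)).IsHermitian)
    (lam : ℝ) (hlam : IsLeast (Set.range hHerm.eigenvalues) lam) (hlam0 : 0 ≤ lam)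
    (S : Matrix (Fin n) (Fin n) ℝ) (hS : S.PosDef)
    (s₁ s₂ μ : ℝ) (hs₁ : 0 < s₁) (hs₁₂ : s₁ ≤ s₂) (hμ : 0 < μ)
    (hSlo : (S - s₁ • (1 : Matrix (Fin n) (Fin n) ℝ)).PosSemidef)
    (hShi : (s₂ • (1 : Matrix (Fin n) (Fin n) ℝ) - S).PosSemidef)
    (hLMI : (-(Matrix.fromBlocks
        (Matrix.fromBlocks (-μ • (1 : Matrix (Fin n) (Fin n) ℝ)) S
          S (A * S + S * Aᵀ + g * Y + Yᵀ * gᵀ - (2 * s₁ * lam) • S))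
        (Matrix.fromBlocks
          (0 : Matrix (Fin n) (Fin m₁) ℝ) (0 : Matrix (Fin n) (Fin m₂) ℝ)
          ((α1 + β1) • (S * W1ᵀ)) Wmin)
        (Matrix.fromBlocks
          (0 : Matrix (Fin m₁) (Fin n) ℝ) ((α1 + β1) • (W1 * S))
          (0 : Matrix (Fin m₂) (Fin n) ℝ) Wminᵀ)
        (Matrix.fromBlocks
          (-(2 * α2 * β2) • (W2ᵀ * W2) - (2 : ℝ) • (1 : Matrix (Fin m₁) (Fin m₁) ℝ))
          ((α2 + β2) • W2ᵀ)
          ((α2 + β2) • W2)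
          (-(2 : ℝ) • (1 : Matrix (Fin m₂) (Fin m₂) ℝ))))).PosSemidef)
    (x₁ x₂ : ℝ → Fin n → ℝ)
    (hx₁ : ∀ t, 0 ≤ t → HasDerivAt x₁
      ((A + g * (Y * S⁻¹)).mulVec (x₁ t)
        + Wmin.mulVec (fun j =>
            φ2 (W2.mulVec (fun i => φ1 (W1.mulVec (x₁ t) i + b1 i)) j + b2 j)) + c) t)
    (hx₂ : ∀ t, 0 ≤ t → HasDerivAt x₂
      ((A + g * (Y * S⁻¹)).mulVec (x₂ t)
        + Wmin.mulVec (fun j =>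
            φ2 (W2.mulVec (fun i => φ1 (W1.mulVec (x₂ t) i + b1 i)) j + b2 j)) + c) t) :
    ∀ t, 0 ≤ t →
      eNorm (x₁ t - x₂ t) ≤
        Real.sqrt (s₂ / s₁) * Real.exp (-(s₁ / (2 * μ)) * t) * eNorm (x₁ 0 - x₂ 0) := by

  -- setup
  classical
  have hdet : IsUnit S.det := isUnit_iff_ne_zero.mpr (ne_of_gt hS.det_pos)
  set P : Matrix (Fin n) (Fin n) ℝ := S⁻¹ with hPdef
  have hPS : P * S = 1 := Matrix.nonsing_inv_mul S hdet
  have hSP : S * P = 1 := Matrix.mul_nonsing_inv S hdet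
  have hSsym : Sᵀ = S := by
    have := hS.1
    rwa [Matrix.IsHermitian, Matrix.conjTranspose_eq_transpose_of_trivial] at this
  have hPsym : Pᵀ = P := by
    rw [hPdef, Matrix.transpose_nonsing_inv, hSsym]
  have hPdot : ∀ (a b : Fin n → ℝ), a ⬝ᵥ P *ᵥ b = (P *ᵥ a) ⬝ᵥ b := by
    intro a b
    rw [Matrix.dotProduct_mulVec, ← Matrix.vecMul_transpose, hPsym]
  have hSdot : ∀ (a b : Fin n → ℝ), a ⬝ᵥ S *ᵥ b = (S *ᵥ a) ⬝ᵥ b := by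
    intro a b
    rw [Matrix.dotProduct_mulVec, ← Matrix.vecMul_transpose, hSsym]
  set e : ℝ → Fin n → ℝ := fun t => x₁ t - x₂ t with hedef
  set Dw : ℝ → Fin m₂ → ℝ := fun t j =>
    φ2 (W2.mulVec (fun i => φ1 (W1.mulVec (x₁ t) i + b1 i)) j + b2 j)
    - φ2 (W2.mulVec (fun i => φ1 (W1.mulVec (x₂ t) i + b1 i)) j + b2 j) with hDwdef
  set ed : ℝ → Fin n → ℝ := fun t => (A + g * (Y * P)) *ᵥ (e t) + Wmin *ᵥ (Dw t) with heddef
  have he : ∀ t, 0 ≤ t → HasDerivAt e (ed t) t := by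
    intro t ht
    have h := (hx₁ t ht).sub (hx₂ t ht)
    refine h.congr_deriv ?_
    funext i
    simp only [heddef, hedef, hDwdef, Pi.add_apply, Pi.sub_apply]
    have h1 : ∀ (z : Fin n → ℝ), ((A + g * (Y * P)) *ᵥ z) i
        = (A *ᵥ z) i + ((g * (Y * P)) *ᵥ z) i := by
      intro z; rw [Matrix.add_mulVec]; rfl
    have h2 := Matrix.mulVec_sub (A + g * (Y * P)) (x₁ t) (x₂ t)
    have h3 : Wmin *ᵥ (fun j =>
        φ2 (W2.mulVec (fun i => φ1 (W1.mulVec (x₁ t) i + b1 i)) j + b2 j)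
        - φ2 (W2.mulVec (fun i => φ1 (W1.mulVec (x₂ t) i + b1 i)) j + b2 j))
        = Wmin *ᵥ (fun j => φ2 (W2.mulVec (fun i => φ1 (W1.mulVec (x₁ t) i + b1 i)) j + b2 j))
        - Wmin *ᵥ (fun j => φ2 (W2.mulVec (fun i => φ1 (W1.mulVec (x₂ t) i + b1 i)) j + b2 j)) := by
      rw [← Matrix.mulVec_sub]; rfl
    rw [congrFun h2 i, congrFun h3 i]
    simp only [Pi.sub_apply, Pi.add_apply]
    ring
  set V : ℝ → ℝ := fun t => e t ⬝ᵥ P *ᵥ e t with hVdef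
  set Vd : ℝ → ℝ := fun t => ed t ⬝ᵥ P *ᵥ e t + e t ⬝ᵥ P *ᵥ ed t with hVddef
  have hVderiv : ∀ t, 0 ≤ t → HasDerivAt V (Vd t) t := by
    intro t ht
    have hcomp : ∀ i, HasDerivAt (fun u => e u i) (ed t i) t :=
      fun i => hasDerivAt_pi.mp (he t ht) i
    have hsum : HasDerivAt (fun u => ∑ i, e u i * ∑ j, P i j * e u j)
        (∑ i, (ed t i * ∑ j, P i j * e t j + e t i * ∑ j, P i j * ed t j)) t := by
      apply HasDerivAt.fun_sum
      intro i _
      exact (hcomp i).mul (HasDerivAt.fun_sum (fun j _ => (hcomp j).const_mul (P i j)))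
    refine hsum.congr_deriv ?_
    simp only [hVddef, dotProduct, Matrix.mulVec, dotProduct,
      Finset.sum_add_distrib]
  -- the key differential inequality
  have hkey : ∀ t, 0 ≤ t → Vd t ≤ -(s₁/μ) * V t := by
    intro t ht
    set E : Fin n → ℝ := e t with hEdef
    set Z : Fin n → ℝ := P *ᵥ E with hZdef
    set Dv : Fin m₁ → ℝ := fun i =>
      φ1 (W1.mulVec (x₁ t) i + b1 i) - φ1 (W1.mulVec (x₂ t) i + b1 i) with hDvdef
    have hSZ : S *ᵥ Z = E := by
      rw [hZdef, Matrix.mulVec_mulVec, hSP, Matrix.one_mulVec]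
    have hW1e : W1 *ᵥ E = fun i => (W1.mulVec (x₁ t) i + b1 i) - (W1.mulVec (x₂ t) i + b1 i) := by
      funext i
      rw [hEdef, hedef]
      simp only [Matrix.mulVec_sub, Pi.sub_apply]
      ring
    have hW2Dv : W2 *ᵥ Dv = fun j =>
        (W2.mulVec (fun i => φ1 (W1.mulVec (x₁ t) i + b1 i)) j + b2 j)
        - (W2.mulVec (fun i => φ1 (W1.mulVec (x₂ t) i + b1 i)) j + b2 j) := by
      funext j
      simp only [hDvdef, Matrix.mulVec, dotProduct]
      have hab : ∀ (u v bb : ℝ), (u + bb) - (v + bb) = u - v := by intros; ring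
      rw [hab, ← Finset.sum_sub_distrib]
      exact Finset.sum_congr rfl (fun i _ => by ring)
    -- sector inequalities
    have hS1 : Dv ⬝ᵥ Dv - (α1+β1) * ((W1 *ᵥ E) ⬝ᵥ Dv)
        + (α1*β1) * ((W1 *ᵥ E) ⬝ᵥ (W1 *ᵥ E)) ≤ 0 := by
      have hterm : ∀ i : Fin m₁,
          Dv i * Dv i - (α1+β1) * ((W1 *ᵥ E) i * Dv i)
          + (α1*β1) * ((W1 *ᵥ E) i * (W1 *ᵥ E) i) ≤ 0 := by
        intro i
        have := hsec1 (W1.mulVec (x₁ t) i + b1 i) (W1.mulVec (x₂ t) i + b1 i)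
        rw [hW1e]
        simp only [hDvdef]
        nlinarith [this]
      calc Dv ⬝ᵥ Dv - (α1+β1) * ((W1 *ᵥ E) ⬝ᵥ Dv) + (α1*β1) * ((W1 *ᵥ E) ⬝ᵥ (W1 *ᵥ E))
          = ∑ i, (Dv i * Dv i - (α1+β1) * ((W1 *ᵥ E) i * Dv i)
            + (α1*β1) * ((W1 *ᵥ E) i * (W1 *ᵥ E) i)) := by
            simp only [dotProduct, Finset.mul_sum, Finset.sum_add_distrib,
              Finset.sum_sub_distrib]
        _ ≤ 0 := Finset.sum_nonpos (fun i _ => hterm i)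
    have hS2 : (Dw t) ⬝ᵥ (Dw t) - (α2+β2) * ((W2 *ᵥ Dv) ⬝ᵥ (Dw t))
        + (α2*β2) * ((W2 *ᵥ Dv) ⬝ᵥ (W2 *ᵥ Dv)) ≤ 0 := by
      have hterm : ∀ j : Fin m₂,
          Dw t j * Dw t j - (α2+β2) * ((W2 *ᵥ Dv) j * Dw t j)
          + (α2*β2) * ((W2 *ᵥ Dv) j * (W2 *ᵥ Dv) j) ≤ 0 := by
        intro j
        have := hsec2 (W2.mulVec (fun i => φ1 (W1.mulVec (x₁ t) i + b1 i)) j + b2 j)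
          (W2.mulVec (fun i => φ1 (W1.mulVec (x₂ t) i + b1 i)) j + b2 j)
        rw [hW2Dv]
        simp only [hDwdef]
        nlinarith [this]
      calc (Dw t) ⬝ᵥ (Dw t) - (α2+β2) * ((W2 *ᵥ Dv) ⬝ᵥ (Dw t))
            + (α2*β2) * ((W2 *ᵥ Dv) ⬝ᵥ (W2 *ᵥ Dv))
          = ∑ j, (Dw t j * Dw t j - (α2+β2) * ((W2 *ᵥ Dv) j * Dw t j)
            + (α2*β2) * ((W2 *ᵥ Dv) j * (W2 *ᵥ Dv) j)) := by
            simp only [dotProduct, Finset.mul_sum, Finset.sum_add_distrib,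
              Finset.sum_sub_distrib]
        _ ≤ 0 := Finset.sum_nonpos (fun j _ => hterm j)
    -- spectral lower bound
    have hspec : lam * (E ⬝ᵥ E) ≤ (α1*β1) * ((W1 *ᵥ E) ⬝ᵥ (W1 *ᵥ E)) := by
      have h := spectral_lb hHerm (fun i => hlam.2 ⟨i, rfl⟩) E
      have : E ⬝ᵥ ((α1 * β1) • (W1ᵀ * W1)) *ᵥ E = (α1*β1) * ((W1 *ᵥ E) ⬝ᵥ (W1 *ᵥ E)) := by
        rw [Matrix.smul_mulVec, dotProduct_smul, smul_eq_mul,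
          ← Matrix.mulVec_mulVec, Matrix.dotProduct_mulVec, Matrix.vecMul_transpose]
      rw [this] at h
      exact h
    -- s₁ V ≤ ‖E‖²
    have hVnn : 0 ≤ Z ⬝ᵥ E := by
      have := (hS.posSemidef.inv).dotProduct_mulVec_nonneg E
      rw [star_trivial] at this
      rw [hZdef, ← hPdot]
      exact this
    have hsv : s₁ * (Z ⬝ᵥ E) ≤ E ⬝ᵥ E := by
      have hcs : (E ⬝ᵥ Z)^2 ≤ (E ⬝ᵥ E) * (Z ⬝ᵥ Z) := cauchy_dot E Z
      have hlo := hSlo.dotProduct_mulVec_nonneg Z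
      rw [star_trivial, Matrix.sub_mulVec, Matrix.smul_mulVec, Matrix.one_mulVec,
        dotProduct_sub, dotProduct_smul, smul_eq_mul, sub_nonneg, hSZ] at hlo
      -- hlo : s₁ * (Z ⬝ᵥ Z) ≤ Z ⬝ᵥ E
      have hEnn : 0 ≤ E ⬝ᵥ E := dot_self_nonneg E
      have hZZ : 0 ≤ Z ⬝ᵥ Z := dot_self_nonneg Z
      have hEZ : E ⬝ᵥ Z = Z ⬝ᵥ E := dotProduct_comm E Z
      rw [hEZ] at hcs
      nlinarith [hcs, hlo, hVnn, hs₁, mul_le_mul_of_nonneg_left hlo hEnn,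
        mul_le_mul_of_nonneg_left hcs hs₁.le]
    -- LMI quadratic form
    set ζ : (Fin n ⊕ Fin n) ⊕ (Fin m₁ ⊕ Fin m₂) → ℝ :=
      Sum.elim (Sum.elim (μ⁻¹ • E) Z) (Sum.elim Dv (Dw t)) with hζdef
    have hq0 := hLMI.dotProduct_mulVec_nonneg ζ
    rw [star_trivial, Matrix.neg_mulVec, dotProduct_neg] at hq0
    have hq1 := neg_nonneg.mp hq0
    simp only [hζdef, Matrix.fromBlocks_mulVec, sumElim_dotProduct_sumElim,
      Sum.elim_comp_inl, Sum.elim_comp_inr, Matrix.add_mulVec, Matrix.sub_mulVec,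
      Matrix.smul_mulVec, Matrix.zero_mulVec, Matrix.one_mulVec,
      Matrix.mulVec_smul, Matrix.neg_mulVec, ← Matrix.mulVec_mulVec,
      dotProduct_add, dotProduct_sub, dotProduct_smul,
      dotProduct_neg, dotProduct_zero, smul_eq_mul,
      add_dotProduct, smul_dotProduct, neg_dotProduct,
      zero_dotProduct, sub_dotProduct] at hq1
    clear hq0
    have hadj : ∀ {a b : ℕ} (M : Matrix (Fin a) (Fin b) ℝ) (u : Fin a → ℝ) (v : Fin b → ℝ),
        u ⬝ᵥ M *ᵥ v = (Mᵀ *ᵥ u) ⬝ᵥ v := by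
      intro a b M u v
      rw [Matrix.dotProduct_mulVec, Matrix.mulVec_transpose]
    have r1 : Z ⬝ᵥ S *ᵥ E = E ⬝ᵥ E := by rw [hSdot, hSZ]
    have r2 : Z ⬝ᵥ S *ᵥ Aᵀ *ᵥ Z = Z ⬝ᵥ A *ᵥ S *ᵥ Z := by
      rw [hSdot Z (Aᵀ *ᵥ Z), hadj Aᵀ, Matrix.transpose_transpose,
        dotProduct_comm]
    have r3 : Z ⬝ᵥ Yᵀ *ᵥ gᵀ *ᵥ Z = Z ⬝ᵥ g *ᵥ Y *ᵥ Z := by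
      rw [hadj Yᵀ, Matrix.transpose_transpose, hadj gᵀ, Matrix.transpose_transpose,
        dotProduct_comm]
    have r4 : Z ⬝ᵥ S *ᵥ W1ᵀ *ᵥ Dv = (W1 *ᵥ E) ⬝ᵥ Dv := by
      rw [hSdot Z (W1ᵀ *ᵥ Dv), hSZ, hadj W1ᵀ, Matrix.transpose_transpose]
    have r5 : Dv ⬝ᵥ W1 *ᵥ S *ᵥ Z = (W1 *ᵥ E) ⬝ᵥ Dv := by
      rw [hSZ, dotProduct_comm]
    have r6 : Dw t ⬝ᵥ Wminᵀ *ᵥ Z = Z ⬝ᵥ Wmin *ᵥ Dw t := by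
      rw [hadj Wminᵀ, Matrix.transpose_transpose, dotProduct_comm]
    have r7 : Dv ⬝ᵥ W2ᵀ *ᵥ W2 *ᵥ Dv = (W2 *ᵥ Dv) ⬝ᵥ (W2 *ᵥ Dv) := by
      rw [hadj W2ᵀ, Matrix.transpose_transpose]
    have r8 : Dv ⬝ᵥ W2ᵀ *ᵥ Dw t = (W2 *ᵥ Dv) ⬝ᵥ Dw t := by
      rw [hadj W2ᵀ, Matrix.transpose_transpose]
    have r9 : Dw t ⬝ᵥ W2 *ᵥ Dv = (W2 *ᵥ Dv) ⬝ᵥ Dw t := dotProduct_comm _ _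
    rw [r2, r3, r4, r5, r6, r7, r8, r9, r1, hSZ] at hq1
    -- Vd and V expressions
    have hVdt : Vd t = 2 * (Z ⬝ᵥ A *ᵥ E) + 2 * (Z ⬝ᵥ g *ᵥ Y *ᵥ Z)
        + 2 * (Z ⬝ᵥ Wmin *ᵥ Dw t) := by
      have h1 : Vd t = ed t ⬝ᵥ Z + E ⬝ᵥ P *ᵥ ed t := rfl
      rw [h1, hPdot E (ed t), ← hZdef, dotProduct_comm (ed t) Z]
      have h2 : Z ⬝ᵥ ed t = Z ⬝ᵥ A *ᵥ E + Z ⬝ᵥ g *ᵥ Y *ᵥ Z + Z ⬝ᵥ Wmin *ᵥ Dw t := by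
        have h3 : ed t = A *ᵥ E + g *ᵥ Y *ᵥ Z + Wmin *ᵥ Dw t := by
          rw [heddef]
          show (A + g * (Y * P)) *ᵥ E + Wmin *ᵥ Dw t = _
          rw [Matrix.add_mulVec, ← Matrix.mulVec_mulVec, ← Matrix.mulVec_mulVec]
        rw [h3, dotProduct_add, dotProduct_add]
      rw [h2]
      ring
    have hVt : V t = Z ⬝ᵥ E := by
      have : V t = E ⬝ᵥ Z := rfl
      rw [this, dotProduct_comm]
    rw [hVdt, hVt]
    have hμinv : (0:ℝ) ≤ μ⁻¹ := le_of_lt (inv_pos.mpr hμ)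
    have hint1 : 0 ≤ lam * (E ⬝ᵥ E - s₁ * (Z ⬝ᵥ E)) :=
      mul_nonneg hlam0 (by linarith [hsv])
    have hint2 : 0 ≤ μ⁻¹ * (E ⬝ᵥ E - s₁ * (Z ⬝ᵥ E)) :=
      mul_nonneg hμinv (by linarith [hsv])
    have hdiv : s₁ / μ = s₁ * μ⁻¹ := div_eq_mul_inv s₁ μ
    rw [hdiv]
    have r0 : μ⁻¹ * (-μ * (μ⁻¹ * (E ⬝ᵥ E))) = -(μ⁻¹ * (E ⬝ᵥ E)) := by
      field_simp
    rw [r0] at hq1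
    linarith [hq1, hS1, hS2, hspec, hint1, hint2]
  -- bounds between V and the euclidean norm
  have hVnn : ∀ u : Fin n → ℝ, 0 ≤ u ⬝ᵥ P *ᵥ u := by
    intro u
    have := (hS.posSemidef.inv).dotProduct_mulVec_nonneg u
    rwa [star_trivial] at this
  have hlow : ∀ u : Fin n → ℝ, s₁ * (u ⬝ᵥ P *ᵥ u) ≤ u ⬝ᵥ u := by
    intro u
    have hcs : (u ⬝ᵥ (P *ᵥ u))^2 ≤ (u ⬝ᵥ u) * ((P *ᵥ u) ⬝ᵥ (P *ᵥ u)) := cauchy_dot u (P *ᵥ u)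
    have hlo := hSlo.dotProduct_mulVec_nonneg (P *ᵥ u)
    rw [star_trivial, Matrix.sub_mulVec, Matrix.smul_mulVec, Matrix.one_mulVec,
      dotProduct_sub, dotProduct_smul, smul_eq_mul, sub_nonneg,
      Matrix.mulVec_mulVec, hSP, Matrix.one_mulVec] at hlo
    have hunn : 0 ≤ u ⬝ᵥ u := dot_self_nonneg u
    have hznn : 0 ≤ (P *ᵥ u) ⬝ᵥ (P *ᵥ u) := dot_self_nonneg (P *ᵥ u)
    have hvnn := hVnn u
    have hcomm : (P *ᵥ u) ⬝ᵥ u = u ⬝ᵥ (P *ᵥ u) := dotProduct_comm _ _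
    rw [hcomm] at hlo
    nlinarith [hcs, hlo, hvnn, hs₁, mul_le_mul_of_nonneg_left hlo hunn,
      mul_le_mul_of_nonneg_left hcs hs₁.le]
  have hhigh : ∀ u : Fin n → ℝ, u ⬝ᵥ u ≤ s₂ * (u ⬝ᵥ P *ᵥ u) := by
    intro u
    have hScs := psd_cauchy hS.posSemidef hSsym u (P *ᵥ u)
    have hSPu : S *ᵥ (P *ᵥ u) = u := by
      rw [Matrix.mulVec_mulVec, hSP, Matrix.one_mulVec]
    rw [hSPu] at hScs
    -- hScs : (u ⬝ᵥ u)^2 ≤ (u ⬝ᵥ S *ᵥ u) * ((P *ᵥ u) ⬝ᵥ u)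
    have hhi := hShi.dotProduct_mulVec_nonneg u
    rw [star_trivial, Matrix.sub_mulVec, Matrix.smul_mulVec, Matrix.one_mulVec,
      dotProduct_sub, dotProduct_smul, smul_eq_mul, sub_nonneg] at hhi
    -- hhi : u ⬝ᵥ S *ᵥ u ≤ s₂ * (u ⬝ᵥ u)
    have hunn : 0 ≤ u ⬝ᵥ u := dot_self_nonneg u
    have hvnn := hVnn u
    have hcomm : (P *ᵥ u) ⬝ᵥ u = u ⬝ᵥ (P *ᵥ u) := dotProduct_comm _ _
    rw [hcomm] at hScs
    rcases eq_or_lt_of_le hunn with h0 | h0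
    · rw [← h0]
      exact mul_nonneg (by linarith) (hVnn u)
    · have hSnn : 0 ≤ u ⬝ᵥ S *ᵥ u := by
        have := hS.posSemidef.dotProduct_mulVec_nonneg u
        rwa [star_trivial] at this
      nlinarith [hScs, hhi, hvnn, hunn, mul_le_mul_of_nonneg_right hhi hvnn]
  -- conclude
  intro t ht
  have hVdecay : V t ≤ V 0 * Real.exp (-(s₁/μ) * t) :=
    decay_lemma hVderiv hkey t ht
  have hexpnn : (0:ℝ) ≤ Real.exp (-(s₁/μ) * t) := (Real.exp_pos _).le
  have hs₂ : (0:ℝ) < s₂ := lt_of_lt_of_le hs₁ hs₁₂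
  have c1 : e t ⬝ᵥ e t ≤ s₂ * V t := hhigh (e t)
  have c3 : V 0 ≤ (e 0 ⬝ᵥ e 0) / s₁ := by
    rw [le_div_iff₀ hs₁]
    have h := hlow (e 0)
    have hV0 : V 0 = e 0 ⬝ᵥ P *ᵥ e 0 := rfl
    rw [hV0]
    linarith [h]
  have key : e t ⬝ᵥ e t ≤ (s₂/s₁) * Real.exp (-(s₁/μ) * t) * (e 0 ⬝ᵥ e 0) := by
    have hVt : V t = e t ⬝ᵥ P *ᵥ e t := rfl
    have c2 : s₂ * V t ≤ s₂ * (V 0 * Real.exp (-(s₁/μ) * t)) :=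
      mul_le_mul_of_nonneg_left hVdecay hs₂.le
    have c4 : s₂ * (V 0 * Real.exp (-(s₁/μ) * t))
        ≤ s₂ * ((e 0 ⬝ᵥ e 0) / s₁ * Real.exp (-(s₁/μ) * t)) := by
      apply mul_le_mul_of_nonneg_left _ hs₂.le
      exact mul_le_mul_of_nonneg_right c3 hexpnn
    calc e t ⬝ᵥ e t ≤ s₂ * V t := c1
      _ ≤ s₂ * (V 0 * Real.exp (-(s₁/μ) * t)) := c2
      _ ≤ s₂ * ((e 0 ⬝ᵥ e 0) / s₁ * Real.exp (-(s₁/μ) * t)) := c4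
      _ = (s₂/s₁) * Real.exp (-(s₁/μ) * t) * (e 0 ⬝ᵥ e 0) := by ring
  -- take square roots
  have hgoal1 : eNorm (e t) = Real.sqrt (e t ⬝ᵥ e t) := rfl
  have hgoal0 : eNorm (e 0) = Real.sqrt (e 0 ⬝ᵥ e 0) := rfl
  have hsqrt := Real.sqrt_le_sqrt key
  have hexp2 : Real.exp (-(s₁/(2*μ)) * t) ^ 2 = Real.exp (-(s₁/μ) * t) := by
    rw [sq, ← Real.exp_add]
    congr 1
    have h2 : s₁/(2*μ) + s₁/(2*μ) = s₁/μ := by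
      rw [← add_div, show s₁ + s₁ = 2*s₁ from by ring,
        mul_div_mul_left _ _ (two_ne_zero)]
    linear_combination (-t) * h2
  have hrhs : Real.sqrt ((s₂/s₁) * Real.exp (-(s₁/μ) * t) * (e 0 ⬝ᵥ e 0))
      = Real.sqrt (s₂/s₁) * Real.exp (-(s₁/(2*μ)) * t) * Real.sqrt (e 0 ⬝ᵥ e 0) := by
    rw [Real.sqrt_mul (by positivity), Real.sqrt_mul (by positivity)]
    congr 2
    rw [← hexp2, Real.sqrt_sq (Real.exp_nonneg _)]
  calc eNorm (e t) = Real.sqrt (e t ⬝ᵥ e t) := hgoal1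
    _ ≤ Real.sqrt ((s₂/s₁) * Real.exp (-(s₁/μ) * t) * (e 0 ⬝ᵥ e 0)) := hsqrt
    _ = Real.sqrt (s₂/s₁) * Real.exp (-(s₁/(2*μ)) * t) * Real.sqrt (e 0 ⬝ᵥ e 0) := hrhs
    _ = Real.sqrt (s₂/s₁) * Real.exp (-(s₁/(2*μ)) * t) * eNorm (e 0) := by rw [hgoal0]
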